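/- arXiv:0810.2767 — 3 statements merged into one kernel-verified Lean document; each statement's English description precedes it below -/
import Mathlib

section
/- The generalized Jucys-Murphy elements ξ_1,...,ξ_n of the group algebra F[G_n] of the wreath product G_n = G^n ⋊ S_n pairwise commute, where ξ_k = Σ_{l=k+1}^{n} Σ_{h∈G} (h^{(k)}(h^{-1})^{(l)}, (k,l)). -/
open MonoidAlgebra

/-- The action of `S_n` on `G^n` by permuting coordinates: `(w • g) i = g (w⁻¹ i)`. -/
def permHom (G : Type*) [Group G] (n : ℕ) : Equiv.Perm (Fin n) →* MulAut (Fin n → G) where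
  toFun σ :=
    { toFun := fun g => g ∘ σ.symm
      invFun := fun g => g ∘ σ
      left_inv := fun g => by ext i; simp
      right_inv := fun g => by ext i; simp
      map_mul' := fun g h => rfl }
  map_one' := by ext g i; simp [Equiv.Perm.one_def]
  map_mul' := fun σ τ => by ext g i; simp [Equiv.Perm.mul_def]

/-- The wreath product `G_n = G^n ⋊ S_n`. -/
abbrev Wreath (G : Type*) [Group G] (n : ℕ) :=
  SemidirectProduct (Fin n → G) (Equiv.Perm (Fin n)) (permHom G n)

/-- `h^{(i)} ∈ G^n`: the tuple with `h` in the `i`-th coordinate and `1` elsewhere. -/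
def coordEl {G : Type*} [Group G] {n : ℕ} (i : Fin n) (h : G) : Fin n → G :=
  fun j => if j = i then h else 1

/-- The generalized Jucys-Murphy element
`ξ_k = Σ_{l>k} Σ_{h∈G} (h^{(k)} (h⁻¹)^{(l)}, (k,l)) ∈ F[G_n]`. -/
noncomputable def jmElem (F : Type*) [Field F] (G : Type*) [Group G] [Fintype G] (n : ℕ)
    (k : Fin n) : MonoidAlgebra F (Wreath G n) :=
  ∑ l ∈ Finset.Ioi k, ∑ h : G,
    single (⟨coordEl k h * coordEl l h⁻¹, Equiv.swap k l⟩ : Wreath G n) 1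

namespace JMaux

variable {G : Type*} [Group G] {n : ℕ}

def tEl (i j : Fin n) (h : G) : Wreath G n := ⟨coordEl i h * coordEl j h⁻¹, Equiv.swap i j⟩

lemma permHom_coordEl (σ : Equiv.Perm (Fin n)) (i : Fin n) (h : G) :
    (permHom G n σ) (coordEl i h) = coordEl (σ i) h := by
  funext x
  simp [permHom, coordEl, Equiv.symm_apply_eq]

lemma tEl_mul (i j a b : Fin n) (h g : G) :
    tEl i j h * tEl a b g =
      ⟨coordEl i h * coordEl j h⁻¹ *
        (coordEl (Equiv.swap i j a) g * coordEl (Equiv.swap i j b) g⁻¹),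
       Equiv.swap i j * Equiv.swap a b⟩ := by
  refine SemidirectProduct.ext ?_ rfl
  show coordEl i h * coordEl j h⁻¹ * (permHom G n (Equiv.swap i j)) (coordEl a g * coordEl b g⁻¹) = _
  rw [map_mul, permHom_coordEl, permHom_coordEl]

lemma braid_tEl (k l p : Fin n) (hkl : k ≠ l) (hkp : k ≠ p) (hlp : l ≠ p) (h g : G) :
    tEl k l h * tEl l p g = tEl l p g * tEl k p (h * g) := by
  rw [tEl_mul, tEl_mul]
  simp only [Equiv.swap_apply_right]
  rw [Equiv.swap_apply_of_ne_of_ne hkp.symm hlp.symm, Equiv.swap_apply_of_ne_of_ne hkl hkp]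
  refine SemidirectProduct.ext ?_ ?_
  · show coordEl k h * coordEl l h⁻¹ * (coordEl k g * coordEl p g⁻¹)
      = coordEl l g * coordEl p g⁻¹ * (coordEl k (h*g) * coordEl l (h*g)⁻¹)
    funext x
    simp only [coordEl, Pi.mul_apply]
    split_ifs <;> simp_all
  · show Equiv.swap k l * Equiv.swap l p = Equiv.swap l p * Equiv.swap k p
    ext x
    simp only [Equiv.Perm.mul_apply, Equiv.swap_apply_def]
    split_ifs <;> simp_all

lemma disjoint_tEl (k m l p : Fin n) (hkl : k ≠ l) (hkp : k ≠ p) (hml : m ≠ l) (hmp : m ≠ p)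
    (h g : G) : tEl k m h * tEl l p g = tEl l p g * tEl k m h := by
  rw [tEl_mul, tEl_mul, Equiv.swap_apply_of_ne_of_ne hkl.symm hml.symm,
    Equiv.swap_apply_of_ne_of_ne hkp.symm hmp.symm,
    Equiv.swap_apply_of_ne_of_ne hkl hkp, Equiv.swap_apply_of_ne_of_ne hml hmp]
  refine SemidirectProduct.ext ?_ ?_
  · funext x
    simp only [coordEl, Pi.mul_apply]
    split_ifs <;> simp_all
  · ext x
    simp only [Equiv.Perm.mul_apply, Equiv.swap_apply_def]
    split_ifs <;> simp_all

lemma tEl_symm (i j : Fin n) (h : G) : tEl j i h⁻¹ = tEl i j h := by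
  refine SemidirectProduct.ext ?_ (Equiv.swap_comm j i)
  show coordEl j h⁻¹ * coordEl i h⁻¹⁻¹ = coordEl i h * coordEl j h⁻¹
  funext x
  simp only [coordEl, Pi.mul_apply, inv_inv]
  split_ifs <;> simp_all

section Alg
variable (F : Type*) [Field F] [Fintype G]

noncomputable def tau (i j : Fin n) : MonoidAlgebra F (Wreath G n) :=
  ∑ h : G, single (tEl i j h) 1

lemma tau_symm (i j : Fin n) : tau (G := G) F i j = tau F j i := by
  unfold tau
  exact Fintype.sum_equiv (Equiv.inv G) _ _ fun h => by rw [Equiv.inv_apply, tEl_symm]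

lemma tau_braid (k l p : Fin n) (hkl : k ≠ l) (hkp : k ≠ p) (hlp : l ≠ p) :
    tau (G := G) F k l * tau F l p = tau F l p * tau F k p := by
  unfold tau
  rw [Finset.sum_mul_sum, Finset.sum_mul_sum]
  rw [Finset.sum_comm]
  refine Finset.sum_congr rfl fun g _ => ?_
  refine Fintype.sum_equiv (Equiv.mulRight g) _ _ fun h => ?_
  simp only [single_mul_single, one_mul, Equiv.coe_mulRight]
  rw [braid_tEl k l p hkl hkp hlp]

lemma tau_braid' (k l p : Fin n) (hkl : k ≠ l) (hkp : k ≠ p) (hlp : l ≠ p) :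
    tau (G := G) F k p * tau F l p = tau F l p * tau F k l := by
  have := tau_braid (G := G) F k p l hkp hkl hlp.symm
  rwa [tau_symm F p l] at this

lemma tau_disjoint (k m l p : Fin n) (hkl : k ≠ l) (hkp : k ≠ p) (hml : m ≠ l) (hmp : m ≠ p) :
    tau (G := G) F k m * tau F l p = tau F l p * tau F k m := by
  unfold tau
  rw [Finset.sum_mul_sum, Finset.sum_mul_sum, Finset.sum_comm]
  refine Finset.sum_congr rfl fun g _ => Finset.sum_congr rfl fun h _ => ?_
  simp only [single_mul_single, one_mul]
  rw [disjoint_tEl k m l p hkl hkp hml hmp]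

lemma sum_tau_comm (k l p : Fin n) (hkl : k < l) (hlp : l < p) :
    (∑ m ∈ Finset.Ioi k, tau (G := G) F k m) * tau F l p
      = tau F l p * ∑ m ∈ Finset.Ioi k, tau F k m := by
  rw [Finset.sum_mul, Finset.mul_sum]
  refine Finset.sum_equiv (Equiv.swap l p) ?_ ?_
  · intro m
    simp only [Finset.mem_Ioi]
    rcases eq_or_ne m l with heq | hml
    · rw [heq, Equiv.swap_apply_left]
      exact ⟨fun _ => hkl.trans hlp, fun _ => hkl⟩
    rcases eq_or_ne m p with heq | hmp
    · rw [heq, Equiv.swap_apply_right]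
      exact ⟨fun _ => hkl, fun _ => hkl.trans hlp⟩
    · rw [Equiv.swap_apply_of_ne_of_ne hml hmp]
  · intro m hm
    simp only [Finset.mem_Ioi] at hm
    have hkl' : k ≠ l := hkl.ne
    have hkp' : k ≠ p := (hkl.trans hlp).ne
    have hlp' : l ≠ p := hlp.ne
    rcases eq_or_ne m l with heq | hml
    · rw [heq, Equiv.swap_apply_left]
      exact tau_braid F k l p hkl' hkp' hlp'
    rcases eq_or_ne m p with heq | hmp
    · rw [heq, Equiv.swap_apply_right]
      exact tau_braid' F k l p hkl' hkp' hlp'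
    · rw [Equiv.swap_apply_of_ne_of_ne hml hmp]
      exact tau_disjoint F k m l p hkl' hkp' hml hmp
lemma jmElem_eq (k : Fin n) : jmElem F G n k = ∑ m ∈ Finset.Ioi k, tau F k m := rfl

lemma jm_comm_of_lt (k l : Fin n) (hkl : k < l) :
    jmElem F G n k * jmElem F G n l = jmElem F G n l * jmElem F G n k := by
  rw [jmElem_eq, jmElem_eq, Finset.mul_sum, Finset.sum_mul]
  refine Finset.sum_congr rfl fun p hp => ?_
  simp only [Finset.mem_Ioi] at hp
  exact sum_tau_comm F k l p hkl hp

end Alg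
end JMaux

/-- The generalized Jucys-Murphy elements `ξ_1, …, ξ_n` pairwise commute. -/
theorem jmElem_pairwise_commute (F : Type*) [Field F] (G : Type*) [Group G] [Fintype G]
    (n : ℕ) (k l : Fin n) :
    jmElem F G n k * jmElem F G n l = jmElem F G n l * jmElem F G n k := by
  rcases lt_trichotomy k l with h | rfl | h
  · exact JMaux.jm_comm_of_lt F k l h
  · rfl
  · exact (JMaux.jm_comm_of_lt F l k h).symm
end

section
/- The map Φ: F[Ḡ_n] → F[G_n] defined on generators by g ↦ g (g ∈ G^n), s_i ↦ (i,i+1), ε_j ↦ 0 is a well-defined algebra homomorphism extending the identity on the subalgebra F[G_n]. -/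
open MonoidAlgebra

/-- The group algebra `ℤ[G]`, used as an ambient ring in which `G ∪ {0}` embeds as
`{0} ∪ {single g 1 | g ∈ G}`. -/
abbrev GA (G : Type*) [Group G] := MonoidAlgebra ℤ G

/-- `a` is an entry in `G ∪ {0}`. -/
def IsEnt {G : Type*} [Group G] (a : GA G) : Prop := a = 0 ∨ ∃ g : G, a = single g 1

/-- An `n × n` matrix with entries in `G ∪ {0}` such that every row and every column
contains at most one nonzero entry. -/
def IsRC {G : Type*} [Group G] {n : ℕ} (M : Matrix (Fin n) (Fin n) (GA G)) : Prop :=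
  (∀ i, {j | M i j ≠ 0}.Subsingleton) ∧ (∀ j, {i | M i j ≠ 0}.Subsingleton) ∧
    ∀ i j, IsEnt (M i j)

theorem IsEnt.mul {G : Type*} [Group G] {a b : GA G} (ha : IsEnt a) (hb : IsEnt b) :
    IsEnt (a * b) := by
  rcases ha with ha | ⟨g, rfl⟩
  · exact Or.inl (by simp [ha])
  rcases hb with hb | ⟨g', rfl⟩
  · exact Or.inl (by simp [hb])
  · exact Or.inr ⟨g * g', by simp [MonoidAlgebra.single_mul_single]⟩

theorem exists_of_mul_ne_zero {G : Type*} [Group G] {n : ℕ}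
    {M N : Matrix (Fin n) (Fin n) (GA G)} {i j : Fin n} (h : (M * N) i j ≠ 0) :
    ∃ k, M i k ≠ 0 ∧ N k j ≠ 0 := by
  by_contra hc
  push_neg at hc
  apply h
  rw [Matrix.mul_apply]
  refine Finset.sum_eq_zero fun k _ => ?_
  by_cases hk : M i k = 0
  · simp [hk]
  · simp [hc k hk]

/-- The semigroup `Ḡ_n` of `n × n` matrices over `G ∪ {0}` with at most one nonzero entry
in each row and each column, realized as a submonoid of the matrix ring over `ℤ[G]`. -/
def GBar (G : Type*) [Group G] (n : ℕ) : Submonoid (Matrix (Fin n) (Fin n) (GA G)) where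
  carrier := {M | IsRC M}
  one_mem' := by
    have key : ∀ a b : Fin n, (1 : Matrix (Fin n) (Fin n) (GA G)) a b ≠ 0 → a = b := by
      intro a b h
      by_contra hab
      simp [Matrix.one_apply, hab] at h
    refine ⟨fun i => ?_, fun j => ?_, fun i j => ?_⟩
    · intro a ha b hb
      exact (key i a ha).symm.trans (key i b hb)
    · intro a ha b hb
      exact (key a j ha).trans (key b j hb).symm
    · by_cases h : i = j
      · subst h
        exact Or.inr ⟨1, by simp [Matrix.one_apply, MonoidAlgebra.one_def]⟩
      · exact Or.inl (by simp [Matrix.one_apply, h])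
  mul_mem' := by
    rintro M N ⟨hMr, hMc, hMe⟩ ⟨hNr, hNc, hNe⟩
    refine ⟨fun i => ?_, fun j => ?_, fun i j => ?_⟩
    · intro a ha b hb
      obtain ⟨k, hk1, hk2⟩ := exists_of_mul_ne_zero ha
      obtain ⟨k', hk1', hk2'⟩ := exists_of_mul_ne_zero hb
      have : k = k' := hMr i hk1 hk1'
      subst this
      exact hNr k hk2 hk2'
    · intro a ha b hb
      obtain ⟨k, hk1, hk2⟩ := exists_of_mul_ne_zero ha
      obtain ⟨k', hk1', hk2'⟩ := exists_of_mul_ne_zero hb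
      have : k = k' := hNc j hk2 hk2'
      subst this
      exact hMc k hk1 hk1'
    · by_cases h : (M * N) i j = 0
      · exact Or.inl h
      obtain ⟨k, hk1, hk2⟩ := exists_of_mul_ne_zero h
      have hsum : (M * N) i j = M i k * N k j := by
        rw [Matrix.mul_apply]
        refine Finset.sum_eq_single k (fun b _ hb => ?_) (by simp)
        by_cases hbz : M i b = 0
        · simp [hbz]
        · exact absurd (hMr i hbz hk1) hb
      rw [hsum]
      exact (hMe i k).mul (hNe k j)

/-- The idempotent `ε_j ∈ Ḡ_n`: the diagonal matrix with `0` in position `(j,j)` and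
`1` in the other diagonal positions. -/
noncomputable def epsEl (G : Type*) [Group G] {n : ℕ} (j : Fin n) : GBar G n :=
  ⟨Matrix.diagonal (fun i => if i = j then 0 else 1), by
    have key : ∀ a b : Fin n,
        Matrix.diagonal (fun i : Fin n => if i = j then (0 : GA G) else 1) a b ≠ 0 → a = b := by
      intro a b h
      by_contra hab
      simp [Matrix.diagonal_apply_ne _ hab] at h
    refine ⟨fun i => ?_, fun k => ?_, fun i k => ?_⟩
    · intro a ha b hb
      exact (key i a ha).symm.trans (key i b hb)
    · intro a ha b hb
      exact (key a k ha).trans (key b k hb).symm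
    · by_cases h : i = k
      · subst h
        by_cases hij : i = j
        · exact Or.inl (by simp [Matrix.diagonal_apply_eq, hij])
        · exact Or.inr ⟨1, by simp [Matrix.diagonal_apply_eq, hij, MonoidAlgebra.one_def]⟩
      · exact Or.inl (by simp [Matrix.diagonal_apply_ne _ h])⟩

/-- The monoid embedding of the wreath product `G_n` into the matrices over `G ∪ {0}`:
`(g,σ)` goes to the matrix whose `(i,j)` entry is `g_i` if `σ(j) = i` and `0` otherwise. -/
noncomputable def wreathHom (G : Type*) [Group G] (n : ℕ) :
    Wreath G n →* Matrix (Fin n) (Fin n) (GA G) where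
  toFun x := Matrix.of fun i j => if x.right j = i then single (x.left i) 1 else 0
  map_one' := by
    apply Matrix.ext
    intro i j
    by_cases h : i = j <;>
      simp [Matrix.one_apply, h, MonoidAlgebra.one_def, eq_comm]
  map_mul' := by
    rintro ⟨a, σ⟩ ⟨b, τ⟩
    apply Matrix.ext
    intro i j
    rw [Matrix.mul_apply, Finset.sum_eq_single (τ j)]
    · simp only [SemidirectProduct.mul_left, SemidirectProduct.mul_right, Matrix.of_apply]
      rw [Equiv.Perm.mul_apply]
      by_cases h : σ (τ j) = i
      · rw [if_pos h, if_pos h]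
        simp only [if_true]
        rw [MonoidAlgebra.single_mul_single]
        congr 1
        have hs : σ.symm i = τ j := by rw [← h]; simp
        simp [permHom, Pi.mul_apply, hs]
      · rw [if_neg h, if_neg h, zero_mul]
    · intro b' _ hb'
      simp only [Matrix.of_apply]
      exact mul_eq_zero_of_right _ (if_neg fun hc => hb' hc.symm)
    · simp

theorem wreathHom_mem_GBar (G : Type*) [Group G] (n : ℕ) (x : Wreath G n) :
    wreathHom G n x ∈ GBar G n := by
  have key : ∀ i j : Fin n, wreathHom G n x i j ≠ 0 → x.right j = i := by
    intro i j h
    by_contra hc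
    simp [wreathHom, hc] at h
  refine ⟨fun i => ?_, fun j => ?_, fun i j => ?_⟩
  · intro a ha b hb
    exact x.right.injective ((key i a ha).trans (key i b hb).symm)
  · intro a ha b hb
    exact (key a j ha).symm.trans (key b j hb)
  · by_cases h : x.right j = i
    · exact Or.inr ⟨x.left i, by simp [wreathHom, h]⟩
    · exact Or.inl (by simp [wreathHom, h])

/-- The wreath product `G_n` as the submonoid of `Ḡ_n` of matrices with exactly one
nonzero entry in each row and each column. -/
noncomputable def GFull (G : Type*) [Group G] (n : ℕ) :
    Submonoid (Matrix (Fin n) (Fin n) (GA G)) :=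
  MonoidHom.mrange (wreathHom G n)

theorem GFull_le_GBar (G : Type*) [Group G] (n : ℕ) : GFull G n ≤ GBar G n := by
  rintro M ⟨x, rfl⟩
  exact wreathHom_mem_GBar G n x

/-- An element of the wreath product, viewed inside `Ḡ_n`. -/
noncomputable def wEl {G : Type*} [Group G] {n : ℕ} (x : Wreath G n) : GBar G n :=
  ⟨wreathHom G n x, wreathHom_mem_GBar G n x⟩

theorem mem_GFull_of_rows {G : Type*} [Group G] {n : ℕ}
    {M : Matrix (Fin n) (Fin n) (GA G)} (hM : IsRC M)
    (hr : ∀ i, ∃ j, M i j ≠ 0) : M ∈ GFull G n := by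
  obtain ⟨hrow, hcol, hent⟩ := hM
  choose c hc using hr
  have hinj : Function.Injective c := by
    intro i i' h
    exact hcol (c i) (hc i) (show M i' (c i) ≠ 0 by rw [h]; exact hc i')
  have hbij : Function.Bijective c := Finite.injective_iff_bijective.mp hinj
  let e := Equiv.ofBijective c hbij
  have hg : ∀ i, ∃ g : G, M i (c i) = single g 1 := by
    intro i
    rcases hent i (c i) with h0 | hgi
    · exact absurd h0 (hc i)
    · exact hgi
  choose g hgspec using hg
  refine ⟨⟨g, e.symm⟩, ?_⟩
  apply Matrix.ext
  intro i j
  show (if e.symm j = i then single (g i) 1 else 0) = M i j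
  by_cases h : e.symm j = i
  · have hcij : c i = j := by
      have : e i = j := by rw [← h]; exact e.apply_symm_apply j
      exact this
    rw [if_pos h, ← hcij]
    exact (hgspec i).symm
  · rw [if_neg h]
    by_contra hne
    apply h
    have : j = c i := hrow i (Ne.symm hne) (hc i)
    rw [this]
    exact (Equiv.symm_apply_eq e).mpr rfl

theorem rows_of_cols {G : Type*} [Group G] {n : ℕ}
    {M : Matrix (Fin n) (Fin n) (GA G)} (hM : IsRC M)
    (hcv : ∀ j, ∃ i, M i j ≠ 0) : ∀ i, ∃ j, M i j ≠ 0 := by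
  obtain ⟨hrow, _, _⟩ := hM
  choose r hr using hcv
  have hinj : Function.Injective r := by
    intro j j' h
    exact hrow (r j) (hr j) (show M (r j) j' ≠ 0 by rw [h]; exact hr j')
  have hsurj : Function.Surjective r := (Finite.injective_iff_surjective).mp hinj
  intro i
  obtain ⟨j, hj⟩ := hsurj i
  exact ⟨j, hj ▸ hr j⟩

theorem rows_of_mem_GFull {G : Type*} [Group G] {n : ℕ}
    {M : Matrix (Fin n) (Fin n) (GA G)} (h : M ∈ GFull G n) :
    (∀ i, ∃ j, M i j ≠ 0) ∧ (∀ j, ∃ i, M i j ≠ 0) := by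
  obtain ⟨x, rfl⟩ := h
  constructor
  · intro i
    refine ⟨x.right.symm i, ?_⟩
    show (if x.right (x.right.symm i) = i then single (x.left i) (1 : ℤ) else 0) ≠ 0
    rw [if_pos (x.right.apply_symm_apply i)]
    simp
  · intro j
    refine ⟨x.right j, ?_⟩
    show (if x.right j = x.right j then single (x.left (x.right j)) (1 : ℤ) else 0) ≠ 0
    rw [if_pos rfl]
    simp

theorem mul_mem_GFull_iff {G : Type*} [Group G] {n : ℕ}
    {M N : Matrix (Fin n) (Fin n) (GA G)} (hM : M ∈ GBar G n) (hN : N ∈ GBar G n) :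
    M * N ∈ GFull G n ↔ M ∈ GFull G n ∧ N ∈ GFull G n := by
  constructor
  · intro h
    obtain ⟨hrows, hcols⟩ := rows_of_mem_GFull h
    constructor
    · apply mem_GFull_of_rows hM
      intro i
      obtain ⟨j, hj⟩ := hrows i
      obtain ⟨k, hk, _⟩ := exists_of_mul_ne_zero hj
      exact ⟨k, hk⟩
    · apply mem_GFull_of_rows hN
      apply rows_of_cols hN
      intro j
      obtain ⟨i, hi⟩ := hcols j
      obtain ⟨k, _, hk⟩ := exists_of_mul_ne_zero hi
      exact ⟨k, hk⟩
  · rintro ⟨h1, h2⟩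
    exact Submonoid.mul_mem _ h1 h2

open scoped Classical in
/-- The underlying function of `phiHom`. -/
noncomputable def phiFun (F : Type*) [Field F] (G : Type*) [Group G] (n : ℕ)
    (M : GBar G n) : MonoidAlgebra F (GFull G n) :=
  if h : (M : Matrix (Fin n) (Fin n) (GA G)) ∈ GFull G n then single ⟨M.1, h⟩ (1 : F)
  else 0

theorem phiFun_of_mem (F : Type*) [Field F] {G : Type*} [Group G] {n : ℕ}
    {M : GBar G n} (h : (M : Matrix (Fin n) (Fin n) (GA G)) ∈ GFull G n) :
    phiFun F G n M = single ⟨M.1, h⟩ (1 : F) := dif_pos h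

theorem phiFun_of_not_mem (F : Type*) [Field F] {G : Type*} [Group G] {n : ℕ}
    {M : GBar G n} (h : ¬ (M : Matrix (Fin n) (Fin n) (GA G)) ∈ GFull G n) :
    phiFun F G n M = 0 := dif_neg h

/-- The monoid hom `Ḡ_n → F[G_n]` sending full matrices to themselves and others to `0`. -/
noncomputable def phiHom (F : Type*) [Field F] (G : Type*) [Group G] (n : ℕ) :
    GBar G n →* MonoidAlgebra F (GFull G n) where
  toFun := phiFun F G n
  map_one' := by
    rw [phiFun_of_mem F (Submonoid.one_mem _)]
    rfl
  map_mul' M N := by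
    show phiFun F G n (M * N) = phiFun F G n M * phiFun F G n N
    by_cases h : ((M * N : GBar G n) : Matrix (Fin n) (Fin n) (GA G)) ∈ GFull G n
    · have hMN : (M : Matrix (Fin n) (Fin n) (GA G)) * N ∈ GFull G n := h
      obtain ⟨hM', hN'⟩ := (mul_mem_GFull_iff M.2 N.2).mp hMN
      rw [phiFun_of_mem F h, phiFun_of_mem F hM', phiFun_of_mem F hN',
        MonoidAlgebra.single_mul_single, one_mul]
      rfl
    · rw [phiFun_of_not_mem F h]
      have hMN : ¬ ((M : Matrix (Fin n) (Fin n) (GA G)) * N ∈ GFull G n) := h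
      rcases not_and_or.mp ((mul_mem_GFull_iff M.2 N.2).not.mp hMN) with h1 | h2
      · rw [phiFun_of_not_mem F h1, zero_mul]
      · rw [phiFun_of_not_mem F h2, mul_zero]

theorem epsEl_not_mem {G : Type*} [Group G] {n : ℕ} (j : Fin n) :
    ¬ ((epsEl G j : GBar G n) : Matrix (Fin n) (Fin n) (GA G)) ∈ GFull G n := by
  intro h
  obtain ⟨_, hcols⟩ := rows_of_mem_GFull h
  obtain ⟨i, hi⟩ := hcols j
  apply hi
  show Matrix.diagonal (fun i : Fin n => if i = j then (0 : GA G) else 1) i j = 0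
  by_cases hij : i = j
  · subst hij; simp [Matrix.diagonal_apply_eq]
  · simp [Matrix.diagonal_apply_ne _ hij]

/-- There is an algebra homomorphism `Φ : F[Ḡ_n] → F[G_n]` which maps each element of the
wreath product `G_n ⊆ Ḡ_n` to itself (in particular `g ↦ g` for `g ∈ G^n` and
`s_i ↦ (i,i+1)`), i.e. extends the identity map of the subalgebra `F[G_n]`, and kills the
idempotents: `ε_j ↦ 0` for all `j`. -/
theorem exists_retraction (F : Type*) [Field F] (G : Type*) [Group G] (n : ℕ) :
    ∃ Φ : MonoidAlgebra F (GBar G n) →ₐ[F] MonoidAlgebra F (GFull G n),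
      (∀ x : Wreath G n,
        Φ (single (wEl x) (1 : F)) =
          single (⟨wreathHom G n x, ⟨x, rfl⟩⟩ : GFull G n) (1 : F)) ∧
      (∀ j : Fin n, Φ (single (epsEl G j) (1 : F)) = 0) := by
  refine ⟨MonoidAlgebra.lift F (MonoidAlgebra F (GFull G n)) (GBar G n) (phiHom F G n),
    ?_, ?_⟩
  · intro x
    rw [MonoidAlgebra.lift_single, one_smul]
    show phiFun F G n (wEl x) = _
    rw [phiFun_of_mem F ⟨x, rfl⟩]
    rfl
  · intro j
    rw [MonoidAlgebra.lift_single, one_smul]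
    show phiFun F G n (epsEl G j) = 0
    rw [phiFun_of_not_mem F (epsEl_not_mem j)]
end

section
/- For each partition-valued function ρ on G_* with ‖ρ‖ ≤ n, the element Δ_n^ρ = Σ_T C_{n,T}^ρ · Π_{i∈T}(1−ε_i), summed over ‖ρ‖-subsets T of {1,...,n}, lies in the center of the semigroup algebra F[Ḡ_n]. -/
open MonoidAlgebra

open scoped Classical

/-- A partition-valued function `ρ = (ρ(C))_{C ∈ G_*}` on the set of conjugacy classes of
`G`, encoded as the multiset of pairs (conjugacy class, part): `ρ(C)` is the multiset of
parts attached to the class `C`. -/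
abbrev PartFun (G : Type*) [Group G] := Multiset (ConjClasses G × ℕ+)

/-- `‖ρ‖ = Σ_{C} |ρ(C)|`, the total size of a partition-valued function. -/
def PartFun.size {G : Type*} [Group G] (ρ : PartFun G) : ℕ :=
  (ρ.map fun p => ((p.2 : ℕ))).sum

/-- The data indexing the summands of `C_{n}^{ρ}` (for `ρ` presented as a list `l` of its
parts): for each part a sequence of indices in `{1,…,n}`, all of them pairwise distinct,
together with `g ∈ G^n` such that each cycle-product lies in the prescribed conjugacy
class and `g_j = 1` for `j` outside the chosen indices. -/
abbrev CnData (G : Type*) [Group G] [Fintype G] (n : ℕ) (l : List (ConjClasses G × ℕ+)) :=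
  { d : ((i : Fin l.length) → Fin ((l.get i).2 : ℕ) → Fin n) × (Fin n → G) //
    Function.Injective
      (fun p : Σ i : Fin l.length, Fin ((l.get i).2 : ℕ) => d.1 p.1 p.2) ∧
    (∀ i : Fin l.length,
      ConjClasses.mk ((List.ofFn fun j => d.2 (d.1 i j)).reverse.prod) = (l.get i).1) ∧
    (∀ k : Fin n,
      (∀ p : Σ i : Fin l.length, Fin ((l.get i).2 : ℕ), d.1 p.1 p.2 ≠ k) → d.2 k = 1) }

/-- The element of `G_n` determined by a summand datum: the permutation is the product of
the cycles `(d_i(0), d_i(1), …)` and the group part is the chosen `g ∈ G^n`. -/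
noncomputable def CnData.elem {G : Type*} [Group G] [Fintype G] {n : ℕ}
    {l : List (ConjClasses G × ℕ+)} (d : CnData G n l) : Wreath G n :=
  ⟨d.1.2,
    (Equiv.Perm.extendDomain
      (Equiv.sigmaCongrRight fun i : Fin l.length => finRotate ((l.get i).2 : ℕ))
      (Equiv.ofInjective _ d.2.1))⟩

/-- The element `C_{n,•}^{ρ}` of `F[G_n]` associated with a list presentation of `ρ`:
the sum of `C_{n,T}^{ρ}` over all `‖ρ‖`-subsets `T` of `{1,…,n}` (the subset `T` being
recovered as the image of the index sequences). -/
noncomputable def CnList (F : Type*) [Field F] (G : Type*) [Group G] [Fintype G] (n : ℕ)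
    (l : List (ConjClasses G × ℕ+)) : MonoidAlgebra F (Wreath G n) :=
  haveI : Fintype (CnData G n l) := Fintype.ofFinite _
  ∑ d : CnData G n l, single d.elem (1 : F)

/-- The element `C_n^{ρ} ∈ F[G_n]`. -/
noncomputable def Cn (F : Type*) [Field F] (G : Type*) [Group G] [Fintype G] (n : ℕ) (ρ : PartFun G) :
    MonoidAlgebra F (Wreath G n) :=
  CnList F G n ρ.toList

/-- The set `T ⊆ {1,…,n}` of indices used by a summand datum (the union of the supports
of the cycles). -/
noncomputable def CnData.T {G : Type*} [Group G] [Fintype G] {n : ℕ}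
    {l : List (ConjClasses G × ℕ+)} (d : CnData G n l) : Finset (Fin n) :=
  Finset.univ.image (fun p : Σ i : Fin l.length, Fin ((l.get i).2 : ℕ) => d.1.1 p.1 p.2)

/-- `ε̄_T = Π_{i ∈ T} (1 − ε_i)` in `F[Ḡ_n]` (the factors pairwise commute; the product is
taken in increasing order of the indices). -/
noncomputable def epsBarT (F : Type*) [Field F] {G : Type*} [Group G] {n : ℕ}
    (T : Finset (Fin n)) : MonoidAlgebra F (GBar G n) :=
  ((T.sort (· ≤ ·)).map fun i => 1 - single (epsEl G i) (1 : F)).prod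

/-- `Δ_n^{ρ} = Σ_T C_{n,T}^{ρ} ε̄_T ∈ F[Ḡ_n]`, for `ρ` presented as a list of parts. -/
noncomputable def DeltaList (F : Type*) [Field F] (G : Type*) [Group G] [Fintype G] (n : ℕ)
    (l : List (ConjClasses G × ℕ+)) : MonoidAlgebra F (GBar G n) :=
  haveI : Fintype (CnData G n l) := Fintype.ofFinite _
  ∑ d : CnData G n l, single (wEl d.elem) (1 : F) * epsBarT F d.T

/-- The element `Δ_n^{ρ} ∈ F[Ḡ_n]`. -/
noncomputable def Delta (F : Type*) [Field F] (G : Type*) [Group G] [Fintype G] (n : ℕ)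
    (ρ : PartFun G) : MonoidAlgebra F (GBar G n) :=
  DeltaList F G n ρ.toList

section Aux
variable {G : Type*} [Group G] {n : ℕ}

theorem epsEl_comm (i j : Fin n) : epsEl G i * epsEl G j = epsEl G j * epsEl G i := by
  apply Subtype.ext
  show (epsEl G i).val * (epsEl G j).val = (epsEl G j).val * (epsEl G i).val
  simp only [epsEl, Matrix.diagonal_mul_diagonal]
  refine congrArg _ (funext fun k => ?_)
  by_cases h1 : k = i <;> by_cases h2 : k = j <;> simp [h1, h2]

theorem epsEl_idem (j : Fin n) : epsEl G j * epsEl G j = epsEl G j := by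
  apply Subtype.ext
  show (epsEl G j).val * (epsEl G j).val = (epsEl G j).val
  simp only [epsEl, Matrix.diagonal_mul_diagonal]
  refine congrArg _ (funext fun k => ?_)
  by_cases h1 : k = j <;> simp [h1]

theorem wEl_mul (x y : Wreath G n) : wEl (x * y) = wEl x * wEl y := by
  apply Subtype.ext
  show wreathHom G n (x * y) = wreathHom G n x * wreathHom G n y
  exact map_mul _ _ _

theorem wEl_mul_epsEl (x : Wreath G n) (j : Fin n) :
    wEl x * epsEl G j = epsEl G (x.right j) * wEl x := by
  apply Subtype.ext
  show (wreathHom G n x) * (Matrix.diagonal _) = (Matrix.diagonal _) * (wreathHom G n x)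
  apply Matrix.ext
  intro i k
  rw [Matrix.mul_diagonal, Matrix.diagonal_mul]
  show (wreathHom G n x) i k * (if k = j then 0 else 1) =
    (if i = x.right j then 0 else 1) * (wreathHom G n x) i k
  have hW : ∀ a b : Fin n, wreathHom G n x a b = if x.right b = a then single (x.left a) 1 else 0 := by
    intro a b; rfl
  by_cases hk : k = j
  · subst hk
    by_cases hi : i = x.right k
    · simp [hi, hW]
    · have : wreathHom G n x i k = 0 := by rw [hW]; rw [if_neg (fun h => hi h.symm)]
      simp [this, hi]
  · by_cases hi : i = x.right j
    · subst hi
      have : wreathHom G n x (x.right j) k = 0 := by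
        rw [hW]; rw [if_neg]
        intro h
        exact hk (x.right.injective h)
      simp [this, hk]
    · simp [hi, hk]

end Aux
section Aux2
variable {G : Type*} [Group G] {n : ℕ}

theorem telescope {H : Type*} [Group H] (C f : ℕ → H) :
    ∀ m : ℕ, (List.ofFn fun j : Fin m => C (j+1) * f j * (C j)⁻¹).reverse.prod
      = C m * (List.ofFn fun j : Fin m => f j).reverse.prod * (C 0)⁻¹
  | 0 => by simp
  | (m+1) => by
    rw [List.ofFn_succ', List.ofFn_succ']
    simp only [List.concat_eq_append, List.reverse_append, List.reverse_cons,
      List.reverse_nil, List.nil_append, List.cons_append, List.prod_cons,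
      Fin.val_last, Fin.coe_castSucc]
    rw [telescope C f m]
    group

theorem extendDomain_conj {α β : Type*} (e : Equiv.Perm α) {g : α → β}
    (hg : Function.Injective g) (σ : Equiv.Perm β) {g' : α → β}
    (hg' : Function.Injective g') [DecidablePred (· ∈ Set.range g)]
    [DecidablePred (· ∈ Set.range g')] (hgg : ∀ a, g' a = σ (g a)) :
    σ * (e.extendDomain (Equiv.ofInjective g hg)) * σ⁻¹
      = e.extendDomain (Equiv.ofInjective g' hg') := by
  have h1 : ∀ a, e.extendDomain (Equiv.ofInjective g hg) (g a) = g (e a) := fun a => by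
    simpa using Equiv.Perm.extendDomain_apply_image e (Equiv.ofInjective g hg) a
  have h2 : ∀ a, e.extendDomain (Equiv.ofInjective g' hg') (g' a) = g' (e a) := fun a => by
    simpa using Equiv.Perm.extendDomain_apply_image e (Equiv.ofInjective g' hg') a
  ext b
  by_cases hb : ∃ a, g' a = b
  · obtain ⟨a, rfl⟩ := hb
    rw [h2]
    simp only [Equiv.Perm.mul_apply, hgg]
    rw [show σ⁻¹ (σ (g a)) = g a from Equiv.symm_apply_apply σ (g a), h1]
  · have hb1 : ¬ (b ∈ Set.range g') := by
      rintro ⟨a, rfl⟩; exact hb ⟨a, rfl⟩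
    have hb2 : ¬ ((σ⁻¹ b) ∈ Set.range g) := by
      rintro ⟨a, ha⟩
      exact hb1 ⟨a, by rw [hgg, ha]; simp⟩
    rw [Equiv.Perm.extendDomain_apply_not_subtype _ _ hb1]
    simp only [Equiv.Perm.mul_apply]
    rw [Equiv.Perm.extendDomain_apply_not_subtype _ _ hb2]
    simp

end Aux2
section Aux3
variable {G : Type*} [Group G] [Fintype G] {n : ℕ} {l : List (ConjClasses G × ℕ+)}

theorem conj_left_apply (x u : Wreath G n) (k : Fin n) :
    (x * u * x⁻¹).left k =
      x.left k * u.left (x.right⁻¹ k) * (x.left (x.right (u.right⁻¹ (x.right⁻¹ k))))⁻¹ := by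
  simp [SemidirectProduct.mul_left, SemidirectProduct.inv_left, SemidirectProduct.mul_right,
    SemidirectProduct.inv_right, permHom, mul_assoc, Equiv.Perm.inv_def]

theorem CnData.elem_left (d : CnData G n l) : d.elem.left = d.1.2 := rfl

theorem CnData.elem_right_apply (d : CnData G n l)
    (p : Σ i : Fin l.length, Fin ((l.get i).2 : ℕ)) :
    (d.elem).right (d.1.1 p.1 p.2) = d.1.1 p.1 (finRotate _ p.2) := by
  have := Equiv.Perm.extendDomain_apply_image
    (Equiv.sigmaCongrRight fun i : Fin l.length => finRotate ((l.get i).2 : ℕ))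
    (Equiv.ofInjective _ d.2.1) p
  simpa [CnData.elem] using this

theorem CnData.elem_right_fix (d : CnData G n l) {k : Fin n}
    (hk : ∀ p : Σ i : Fin l.length, Fin ((l.get i).2 : ℕ), d.1.1 p.1 p.2 ≠ k) :
    (d.elem).right k = k := by
  show Equiv.Perm.extendDomain _ (Equiv.ofInjective _ d.2.1) k = k
  apply Equiv.Perm.extendDomain_apply_not_subtype
  rintro ⟨p, hp⟩
  exact hk p hp

end Aux3

theorem Equiv.Perm.inv_apply_self {α : Type*} (f : Equiv.Perm α) (x : α) : f⁻¹ (f x) = x :=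
  f.symm_apply_apply x

theorem Equiv.Perm.apply_inv_self {α : Type*} (f : Equiv.Perm α) (x : α) : f (f⁻¹ x) = x :=
  f.apply_symm_apply x
set_option linter.unusedSectionVars false

theorem finRotate_symm_val {m : ℕ} (j : Fin (m + 1)) :
    (((finRotate (m + 1)).symm j : Fin (m + 1)) : ℕ) = ((j : ℕ) + m) % (m + 1) := by
  have hlt : ((j : ℕ) + m) % (m + 1) < m + 1 := Nat.mod_lt _ (Nat.succ_pos m)
  have hj : j = finRotate (m + 1) ⟨((j : ℕ) + m) % (m + 1), hlt⟩ := by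
    rw [finRotate_succ_apply]
    apply Fin.ext
    rw [Fin.add_def]
    simp only [Fin.val_one']
    rw [← Nat.add_mod, Nat.add_assoc, Nat.add_mod_right, Nat.mod_eq_of_lt j.isLt]
  conv_lhs => rw [hj, Equiv.symm_apply_apply]
theorem cycle_conj {H : Type*} [Group H] {m : ℕ} (A g : Fin (m+1) → H) :
    ConjClasses.mk ((List.ofFn fun j : Fin (m+1) =>
        A j * g j * (A ((finRotate (m+1)).symm j))⁻¹).reverse.prod)
      = ConjClasses.mk ((List.ofFn fun j : Fin (m+1) => g j).reverse.prod) := by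
  set C : ℕ → H := fun t => A ⟨(t + m) % (m+1), Nat.mod_lt _ (Nat.succ_pos m)⟩ with hC
  set f : ℕ → H := fun t => if h : t < m+1 then g ⟨t, h⟩ else 1 with hf
  have h1 : (List.ofFn fun j : Fin (m+1) => A j * g j * (A ((finRotate (m+1)).symm j))⁻¹)
      = List.ofFn fun j : Fin (m+1) => C ((j : ℕ)+1) * f (j : ℕ) * (C (j : ℕ))⁻¹ := by
    refine congrArg _ (funext fun j => ?_)
    have e1 : C ((j : ℕ)+1) = A j := by
      simp only [hC]
      congr 1
      apply Fin.ext
      show ((j : ℕ)+1+m) % (m+1) = (j : ℕ)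
      have h : (j : ℕ)+1+m = (j : ℕ) + (m+1) := by omega
      rw [h, Nat.add_mod_right, Nat.mod_eq_of_lt j.isLt]
    have e2 : C (j : ℕ) = A ((finRotate (m+1)).symm j) := by
      simp only [hC]
      congr 1
      apply Fin.ext
      exact (finRotate_symm_val j).symm
    have e3 : f (j : ℕ) = g j := by
      simp [hf, j.isLt]; intro hj; exact absurd j.isLt (by omega)
    rw [e1, e2, e3]
  rw [h1, telescope C f (m+1)]
  have h2 : (List.ofFn fun j : Fin (m+1) => f (j : ℕ)) = List.ofFn fun j : Fin (m+1) => g j :=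
    congrArg _ (funext fun j => by
      simp [hf, j.isLt]; intro hj; exact absurd j.isLt (by omega))
  rw [h2]
  have e4 : C (m+1) = C 0 := by
    simp only [hC]
    congr 1
    apply Fin.ext
    show (m+1+m) % (m+1) = (0+m) % (m+1)
    have h : m+1+m = m + (m+1) := by omega
    rw [h, Nat.add_mod_right, Nat.zero_add]
  rw [e4, ConjClasses.mk_eq_mk_iff_isConj]
  exact isConj_iff.mpr ⟨(C 0)⁻¹, by group⟩
theorem cycle_conj' {H : Type*} [Group H] : ∀ {m : ℕ}, 0 < m → ∀ (A g : Fin m → H),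
    ConjClasses.mk ((List.ofFn fun j : Fin m =>
        A j * g j * (A ((finRotate m).symm j))⁻¹).reverse.prod)
      = ConjClasses.mk ((List.ofFn fun j : Fin m => g j).reverse.prod)
  | 0, h => absurd h (by simp)
  | (m+1), _ => fun A g => cycle_conj A g

section Aux6
variable {G : Type*} [Group G] [Fintype G] {n : ℕ} {l : List (ConjClasses G × ℕ+)}

theorem CnData.elem_rotinv (d : CnData G n l)
    (p : Σ i : Fin l.length, Fin ((l.get i).2 : ℕ)) :
    (d.elem.right)⁻¹ (d.1.1 p.1 p.2) = d.1.1 p.1 ((finRotate _).symm p.2) := by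
  have h := CnData.elem_right_apply d ⟨p.1, (finRotate _).symm p.2⟩
  simp only [Equiv.apply_symm_apply] at h
  conv_lhs => rw [← h]
  rw [Equiv.Perm.inv_apply_self]

/-- The data of the conjugated summand. -/
noncomputable def conjPair (x : Wreath G n) (d : CnData G n l) :
    ((i : Fin l.length) → Fin ((l.get i).2 : ℕ) → Fin n) × (Fin n → G) :=
  ⟨fun i j => x.right (d.1.1 i j), (x * d.elem * x⁻¹).left⟩

theorem conjPair_inj (x : Wreath G n) (d : CnData G n l) :
    Function.Injective (fun p : Σ i : Fin l.length, Fin ((l.get i).2 : ℕ) =>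
      (conjPair x d).1 p.1 p.2) :=
  fun p q h => d.2.1 (x.right.injective h)

theorem conjPair_cond2 (x : Wreath G n) (d : CnData G n l) (i : Fin l.length) :
    ConjClasses.mk ((List.ofFn fun j =>
        (conjPair x d).2 ((conjPair x d).1 i j)).reverse.prod) = (l.get i).1 := by
  show ConjClasses.mk ((List.ofFn fun j : Fin ((l.get i).2 : ℕ) =>
      (x * d.elem * x⁻¹).left (x.right (d.1.1 i j))).reverse.prod) = (l.get i).1
  have hlist : (List.ofFn fun j : Fin ((l.get i).2 : ℕ) =>
      (x * d.elem * x⁻¹).left (x.right (d.1.1 i j)))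
    = List.ofFn fun j : Fin ((l.get i).2 : ℕ) =>
      (x.left (x.right (d.1.1 i j))) * d.1.2 (d.1.1 i j)
        * (x.left (x.right (d.1.1 i ((finRotate _).symm j))))⁻¹ := by
    refine congrArg _ (funext fun j => ?_)
    rw [conj_left_apply]
    rw [Equiv.Perm.inv_apply_self]
    rw [CnData.elem_rotinv d ⟨i, j⟩]
    rfl
  rw [hlist]
  exact (cycle_conj' (l.get i).2.pos _ _).trans (d.2.2.1 i)

theorem conjPair_cond3 (x : Wreath G n) (d : CnData G n l) (k : Fin n)
    (hk : ∀ p : Σ i : Fin l.length, Fin ((l.get i).2 : ℕ), (conjPair x d).1 p.1 p.2 ≠ k) :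
    (conjPair x d).2 k = 1 := by
  show (x * d.elem * x⁻¹).left k = 1
  rw [conj_left_apply]
  have h1 : ∀ p : Σ i : Fin l.length, Fin ((l.get i).2 : ℕ),
      d.1.1 p.1 p.2 ≠ x.right⁻¹ k := by
    intro p h
    apply hk p
    show x.right (d.1.1 p.1 p.2) = k
    rw [h]
    exact Equiv.Perm.apply_inv_self _ _
  have h2 : d.1.2 (x.right⁻¹ k) = 1 := d.2.2.2 _ h1
  have h3 : d.elem.right (x.right⁻¹ k) = x.right⁻¹ k := CnData.elem_right_fix d h1
  have h4 : (d.elem.right)⁻¹ (x.right⁻¹ k) = x.right⁻¹ k := by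
    conv_lhs => rw [← h3, Equiv.Perm.inv_apply_self]
  show x.left k * d.1.2 (x.right⁻¹ k) * (x.left (x.right ((d.elem.right)⁻¹ (x.right⁻¹ k))))⁻¹ = 1
  rw [h2, h4, Equiv.Perm.apply_inv_self]
  simp

/-- Conjugation of a summand datum by `x ∈ G_n`. -/
noncomputable def conjData (x : Wreath G n) (d : CnData G n l) : CnData G n l :=
  ⟨conjPair x d, conjPair_inj x d, conjPair_cond2 x d, conjPair_cond3 x d⟩

theorem conjData_val (x : Wreath G n) (d : CnData G n l) :
    (conjData x d : ((i : Fin l.length) → Fin ((l.get i).2 : ℕ) → Fin n) × (Fin n → G))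
      = conjPair x d := rfl

end Aux6
section Aux7
variable {G : Type*} [Group G] [Fintype G] {n : ℕ} {l : List (ConjClasses G × ℕ+)}

theorem CnData.elem_right_def (d : CnData G n l) : d.elem.right =
    Equiv.Perm.extendDomain (Equiv.sigmaCongrRight fun i : Fin l.length =>
      finRotate ((l.get i).2 : ℕ)) (Equiv.ofInjective _ d.2.1) := rfl

theorem wr_mul_right_def (x u y : Wreath G n) :
    (x * u * y).right = x.right * u.right * y.right := rfl

theorem conjData_elem (x : Wreath G n) (d : CnData G n l) :
    (conjData x d).elem = x * d.elem * x⁻¹ := by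
  have hl : (conjData x d).elem.left = (x * d.elem * x⁻¹).left := rfl
  have hr : (conjData x d).elem.right = (x * d.elem * x⁻¹).right := by
    rw [wr_mul_right_def, SemidirectProduct.inv_right, CnData.elem_right_def,
      CnData.elem_right_def d]
    exact (extendDomain_conj (Equiv.sigmaCongrRight fun i : Fin l.length =>
      finRotate ((l.get i).2 : ℕ)) d.2.1 x.right (conjData x d).2.1 (fun p => rfl)).symm
  cases' h1 : (conjData x d).elem with a1 b1
  cases' h2 : (x * d.elem * x⁻¹) with a2 b2
  rw [h1, h2] at hl hr
  simp only at hl hr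
  subst hl; subst hr; rfl

theorem conjData_comp (x : Wreath G n) (d : CnData G n l) :
    conjData x⁻¹ (conjData x d) = d := by
  apply Subtype.ext
  rw [conjData_val]
  have h1 : (conjPair x⁻¹ (conjData x d)).1 = d.1.1 := by
    funext i j
    show x⁻¹.right ((conjData x d).1.1 i j) = d.1.1 i j
    rw [conjData_val]
    show x⁻¹.right (x.right (d.1.1 i j)) = d.1.1 i j
    rw [SemidirectProduct.inv_right]
    exact Equiv.Perm.inv_apply_self _ _
  have h2 : (conjPair x⁻¹ (conjData x d)).2 = d.1.2 := by
    show (x⁻¹ * (conjData x d).elem * x⁻¹⁻¹).left = d.1.2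
    rw [conjData_elem]
    have h : x⁻¹ * (x * d.elem * x⁻¹) * x⁻¹⁻¹ = d.elem := by group
    rw [h]
    exact CnData.elem_left d
  exact Prod.ext h1 h2

theorem conjData_T (x : Wreath G n) (d : CnData G n l) :
    (conjData x d).T = d.T.image x.right := by
  show Finset.univ.image (fun p : Σ i : Fin l.length, Fin ((l.get i).2 : ℕ) =>
      (conjData x d).1.1 p.1 p.2) = _
  rw [CnData.T, Finset.image_image]
  rfl

theorem conjData_bijective (x : Wreath G n) :
    Function.Bijective (conjData x : CnData G n l → CnData G n l) := by
  have h1 : Function.LeftInverse (conjData x⁻¹) (conjData (l := l) (n := n) x) :=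
    conjData_comp x
  have h2 : Function.RightInverse (conjData x⁻¹) (conjData (l := l) (n := n) x) := by
    intro d
    have := conjData_comp x⁻¹ d
    rwa [inv_inv] at this
  exact ⟨h1.injective, h2.surjective⟩

end Aux7
section Aux8
variable (F : Type*) [Field F] {G : Type*} [Group G] {n : ℕ}

/-- `ε_i` as an element of the semigroup algebra. -/
noncomputable def Ee (i : Fin n) : MonoidAlgebra F (GBar G n) :=
  single (epsEl G i) (1 : F)

variable {F}

theorem Ee_mul_Ee (i j : Fin n) : (Ee F i : MonoidAlgebra F (GBar G n)) * Ee F j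
    = Ee F j * Ee F i := by
  simp only [Ee, MonoidAlgebra.single_mul_single, one_mul, epsEl_comm]

theorem Ee_commute_sub_one (k i : Fin n) :
    Commute (Ee F k : MonoidAlgebra F (GBar G n)) (1 - Ee F i) :=
  (Commute.one_right _).sub_right (Ee_mul_Ee k i)

theorem Ee_commute_list_prod (k : Fin n) (L : List (Fin n)) :
    Commute (Ee F k : MonoidAlgebra F (GBar G n))
      ((L.map fun i => 1 - Ee F i).prod) := by
  apply Commute.list_prod_right
  intro a ha
  obtain ⟨i, _, rfl⟩ := List.mem_map.mp ha
  exact Ee_commute_sub_one k i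

theorem list_prod_mul_Ee_eq_zero {k : Fin n} :
    ∀ {L : List (Fin n)}, k ∈ L →
      ((L.map fun i => 1 - Ee F i).prod : MonoidAlgebra F (GBar G n)) * Ee F k = 0 := by
  intro L
  induction L with
  | nil => intro h; simp at h
  | cons a L ih =>
    intro hk
    rw [List.map_cons, List.prod_cons]
    rcases List.mem_cons.mp hk with h | h
    · subst h
      rw [mul_assoc, ← (Ee_commute_list_prod k L).eq, ← mul_assoc]
      have : ((1 : MonoidAlgebra F (GBar G n)) - Ee F k) * Ee F k = 0 := by
        rw [sub_mul, one_mul, Ee, MonoidAlgebra.single_mul_single, one_mul, epsEl_idem,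
          sub_self]
      rw [this, zero_mul]
    · rw [mul_assoc, ih h, mul_zero]

theorem epsBarT_eq (T : Finset (Fin n)) :
    (epsBarT F T : MonoidAlgebra F (GBar G n))
      = ((T.sort (· ≤ ·)).map fun i => 1 - Ee F i).prod := rfl

theorem Ee_commute_epsBarT (k : Fin n) (T : Finset (Fin n)) :
    Commute (Ee F k : MonoidAlgebra F (GBar G n)) (epsBarT F T) := by
  rw [epsBarT_eq]; exact Ee_commute_list_prod k (T.sort (· ≤ ·))

theorem epsBarT_mul_Ee_eq_zero {k : Fin n} {T : Finset (Fin n)} (hk : k ∈ T) :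
    (epsBarT F T : MonoidAlgebra F (GBar G n)) * Ee F k = 0 := by
  rw [epsBarT_eq]
  exact list_prod_mul_Ee_eq_zero ((Finset.mem_sort _).mpr hk)

theorem Ee_mul_epsBarT_eq_zero {k : Fin n} {T : Finset (Fin n)} (hk : k ∈ T) :
    (Ee F k : MonoidAlgebra F (GBar G n)) * epsBarT F T = 0 := by
  rw [(Ee_commute_epsBarT k T).eq]
  exact epsBarT_mul_Ee_eq_zero hk

theorem of_wEl_mul_Ee {G : Type*} [Group G] {n : ℕ} (x : Wreath G n) (j : Fin n) :
    (single (wEl x) (1 : F) : MonoidAlgebra F (GBar G n)) * Ee F j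
      = Ee F (x.right j) * single (wEl x) (1 : F) := by
  simp only [Ee, MonoidAlgebra.single_mul_single, one_mul, wEl_mul_epsEl]

theorem of_wEl_mul_sub_one {G : Type*} [Group G] {n : ℕ} (x : Wreath G n) (j : Fin n) :
    (single (wEl x) (1 : F) : MonoidAlgebra F (GBar G n)) * (1 - Ee F j)
      = (1 - Ee F (x.right j)) * single (wEl x) (1 : F) := by
  rw [mul_sub, sub_mul, mul_one, one_mul, of_wEl_mul_Ee]

theorem of_wEl_mul_list_prod {G : Type*} [Group G] {n : ℕ} (x : Wreath G n)
    (L : List (Fin n)) :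
    (single (wEl x) (1 : F) : MonoidAlgebra F (GBar G n))
        * ((L.map fun i => 1 - Ee F i).prod)
      = (((L.map x.right).map fun i => 1 - Ee F i).prod) * single (wEl x) (1 : F) := by
  induction L with
  | nil => simp
  | cons a L ih =>
    simp only [List.map_cons, List.prod_cons]
    rw [← mul_assoc, of_wEl_mul_sub_one, mul_assoc, ih, ← mul_assoc]

theorem pairwise_commute_eps (L : List (Fin n)) :
    ((L.map fun i => (1 : MonoidAlgebra F (GBar G n)) - Ee F i)).Pairwise Commute := by
  induction L with
  | nil => simp
  | cons a L ih =>
    rw [List.map_cons]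
    refine List.Pairwise.cons ?_ ih
    intro b hb
    obtain ⟨i, _, rfl⟩ := List.mem_map.mp hb
    exact Commute.sub_left (Commute.one_left _) (Ee_commute_sub_one a i)

end Aux8
section Aux9
variable {F : Type*} [Field F] {G : Type*} [Group G] [Fintype G] {n : ℕ}
  {l : List (ConjClasses G × ℕ+)}

theorem epsBarT_image (σ : Equiv.Perm (Fin n)) (T : Finset (Fin n)) :
    (epsBarT F (T.image σ) : MonoidAlgebra F (GBar G n))
      = (((T.sort (· ≤ ·)).map σ).map fun i => 1 - Ee F i).prod := by
  rw [epsBarT_eq]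
  refine List.Perm.prod_eq' (List.Perm.map _ ?_) (pairwise_commute_eps _)
  rw [← Multiset.coe_eq_coe]
  show ((T.image σ).sort (· ≤ ·) : Multiset (Fin n)) = ((T.sort (· ≤ ·) : List (Fin n)) : Multiset (Fin n)).map σ
  rw [Finset.sort_eq, Finset.sort_eq]
  show (T.image σ).val = T.val.map σ
  exact Finset.image_val_of_injOn (σ.injective.injOn)

theorem of_wEl_mul_epsBarT (x : Wreath G n) (T : Finset (Fin n)) :
    (single (wEl x) (1 : F) : MonoidAlgebra F (GBar G n)) * epsBarT F T
      = epsBarT F (T.image x.right) * single (wEl x) (1 : F) := by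
  rw [epsBarT_eq, epsBarT_image, of_wEl_mul_list_prod]

theorem mem_T_iff (d : CnData G n l) (k : Fin n) :
    k ∈ d.T ↔ ∃ p : Σ i : Fin l.length, Fin ((l.get i).2 : ℕ), d.1.1 p.1 p.2 = k := by
  simp [CnData.T]

theorem elem_right_inv_mem_T (d : CnData G n l) {k : Fin n} (hk : k ∈ d.T) :
    (d.elem.right)⁻¹ k ∈ d.T := by
  obtain ⟨p, rfl⟩ := (mem_T_iff d k).mp hk
  rw [CnData.elem_rotinv d p]
  exact (mem_T_iff d _).mpr ⟨⟨p.1, (finRotate _).symm p.2⟩, rfl⟩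

theorem elem_right_inv_not_mem_T (d : CnData G n l) {k : Fin n} (hk : k ∉ d.T) :
    (d.elem.right)⁻¹ k = k := by
  have h : d.elem.right k = k :=
    CnData.elem_right_fix d (fun p hp => hk ((mem_T_iff d k).mpr ⟨p, hp⟩))
  conv_lhs => rw [← h, Equiv.Perm.inv_apply_self]

theorem univ_eq_univ {α : Type*} (i1 i2 : Fintype α) :
    @Finset.univ α i1 = @Finset.univ α i2 := by
  cases Subsingleton.elim i1 i2; rfl

theorem DeltaList_eq [Fintype (CnData G n l)] : DeltaList F G n l
    = ∑ d : CnData G n l, single (wEl d.elem) (1 : F) * epsBarT F d.T := by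
  rw [DeltaList]
  exact Finset.sum_congr (univ_eq_univ _ _) fun _ _ => rfl

theorem Ee_commute_DeltaList (j : Fin n) :
    Commute (Ee F j : MonoidAlgebra F (GBar G n)) (DeltaList F G n l) := by
  haveI : Fintype (CnData G n l) := Fintype.ofFinite _
  rw [DeltaList_eq]
  apply Commute.sum_right
  intro d _
  -- LHS : Ee j * (w * ε̄) ; RHS : (w * ε̄) * Ee j
  show Ee F j * (single (wEl d.elem) 1 * epsBarT F d.T)
    = single (wEl d.elem) 1 * epsBarT F d.T * Ee F j
  have hconj : (Ee F j : MonoidAlgebra F (GBar G n)) * single (wEl d.elem) 1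
      = single (wEl d.elem) 1 * Ee F ((d.elem.right)⁻¹ j) := by
    rw [of_wEl_mul_Ee d.elem ((d.elem.right)⁻¹ j), Equiv.Perm.apply_inv_self]
  by_cases hj : j ∈ d.T
  · have hA : (Ee F j : MonoidAlgebra F (GBar G n))
        * (single (wEl d.elem) 1 * epsBarT F d.T) = 0 := by
      rw [← mul_assoc, hconj, mul_assoc,
        Ee_mul_epsBarT_eq_zero (elem_right_inv_mem_T d hj), mul_zero]
    have hB : single (wEl d.elem) (1 : F) * epsBarT F d.T * Ee F j = 0 := by
      rw [mul_assoc, epsBarT_mul_Ee_eq_zero hj, mul_zero]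
    rw [hA, hB]
  · rw [← mul_assoc, hconj, elem_right_inv_not_mem_T d hj, mul_assoc,
      (Ee_commute_epsBarT j d.T).eq, mul_assoc]

theorem of_wEl_commute_DeltaList (x : Wreath G n) :
    Commute (single (wEl x) (1 : F) : MonoidAlgebra F (GBar G n)) (DeltaList F G n l) := by
  haveI : Fintype (CnData G n l) := Fintype.ofFinite _
  rw [DeltaList_eq]
  show single (wEl x) (1:F) * _ = _ * single (wEl x) (1:F)
  rw [Finset.mul_sum, Finset.sum_mul]
  have hre := Fintype.sum_bijective (conjData x) (conjData_bijective x)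
    (fun d : CnData G n l =>
      single (wEl x) (1:F) * (single (wEl d.elem) 1 * epsBarT F d.T))
    (fun d : CnData G n l =>
      single (wEl d.elem) 1 * epsBarT F d.T * single (wEl x) (1:F)) ?_
  · exact hre
  intro d
  show single (wEl x) (1:F) * (single (wEl d.elem) 1 * epsBarT F d.T)
    = single (wEl (conjData x d).elem) 1 * epsBarT F ((conjData x d).T)
        * single (wEl x) (1:F)
  rw [conjData_elem, conjData_T]
  rw [← mul_assoc, MonoidAlgebra.single_mul_single, one_mul, ← wEl_mul]
  rw [mul_assoc, ← of_wEl_mul_epsBarT, ← mul_assoc, MonoidAlgebra.single_mul_single,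
    one_mul, ← wEl_mul]
  have h : x * d.elem * x⁻¹ * x = x * d.elem := by group
  rw [h]

end Aux9
section Aux10
variable {F : Type*} [Field F] {G : Type*} [Group G] {n : ℕ}

/-- Product of `ε_j` over a list of indices. -/
noncomputable def epsProd (L : List (Fin n)) : GBar G n := (L.map (epsEl G)).prod

theorem epsProd_val (L : List (Fin n)) :
    ((epsProd L : GBar G n) : Matrix (Fin n) (Fin n) (GA G))
      = Matrix.diagonal (fun i => if i ∈ L then (0 : GA G) else 1) := by
  induction L with
  | nil =>
    show ((1 : GBar G n) : Matrix (Fin n) (Fin n) (GA G)) = _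
    simp [Matrix.diagonal_one]
  | cons a L ih =>
    show (((epsEl G a) * (L.map (epsEl G)).prod : GBar G n) : Matrix (Fin n) (Fin n) (GA G)) = _
    rw [Submonoid.coe_mul]
    rw [show ((L.map (epsEl G)).prod : GBar G n) = epsProd L from rfl, ih]
    show Matrix.diagonal _ * Matrix.diagonal _ = _
    rw [Matrix.diagonal_mul_diagonal]
    refine congrArg _ (funext fun k => ?_)
    by_cases h1 : k = a <;> by_cases h2 : k ∈ L <;> simp [h1, h2]

theorem exists_decomp (M : GBar G n) :
    ∃ (x : Wreath G n) (L : List (Fin n)), M = wEl x * epsProd L := by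
  obtain ⟨hrow, hcol, hent⟩ := M.2
  have rinj : Function.Injective
      (fun j : {j : Fin n // ∃ i, (M : Matrix (Fin n) (Fin n) (GA G)) i j ≠ 0} =>
        (j.2).choose) := by
    intro j1 j2 h
    apply Subtype.ext
    have h1 : (M : Matrix (Fin n) (Fin n) (GA G)) j1.2.choose j1.1 ≠ 0 := j1.2.choose_spec
    have h' : j1.2.choose = j2.2.choose := h
    have h2 : (M : Matrix (Fin n) (Fin n) (GA G)) j1.2.choose j2.1 ≠ 0 := by
      rw [h']; exact j2.2.choose_spec
    exact hrow j1.2.choose h1 h2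
  set σ : Equiv.Perm (Fin n) := (Equiv.ofInjective _ rinj).extendSubtype with hσdef
  have hσ : ∀ (j : Fin n) (hj : ∃ i, (M : Matrix (Fin n) (Fin n) (GA G)) i j ≠ 0),
      σ j = hj.choose := by
    intro j hj
    rw [hσdef, Equiv.extendSubtype_apply_of_mem _ j hj]
    rfl
  set g : Fin n → G := fun i =>
    if h : ∃ k, (M : Matrix (Fin n) (Fin n) (GA G)) i k ≠ 0 then
      ((hent i h.choose).resolve_left h.choose_spec).choose
    else 1 with hgdef
  have hg : ∀ (i : Fin n) (h : ∃ k, (M : Matrix (Fin n) (Fin n) (GA G)) i k ≠ 0),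
      (M : Matrix (Fin n) (Fin n) (GA G)) i h.choose = single (g i) 1 := by
    intro i h
    rw [hgdef]
    simp only [dif_pos h]
    exact ((hent i h.choose).resolve_left h.choose_spec).choose_spec
  refine ⟨⟨g, σ⟩, ((Finset.univ.filter
    (fun j => ¬ ∃ i, (M : Matrix (Fin n) (Fin n) (GA G)) i j ≠ 0)).sort (· ≤ ·)), ?_⟩
  have hL : ∀ j, (j ∈ ((Finset.univ.filter
      (fun j => ¬ ∃ i, (M : Matrix (Fin n) (Fin n) (GA G)) i j ≠ 0)).sort (· ≤ ·)))
      ↔ ¬ ∃ i, (M : Matrix (Fin n) (Fin n) (GA G)) i j ≠ 0 := by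
    intro j
    rw [Finset.mem_sort, Finset.mem_filter]
    simp
  apply Subtype.ext
  rw [Submonoid.coe_mul, epsProd_val]
  show (M : Matrix (Fin n) (Fin n) (GA G)) = wreathHom G n ⟨g, σ⟩ * Matrix.diagonal _
  apply Matrix.ext
  intro i j
  rw [Matrix.mul_diagonal]
  have hW : ∀ a b, wreathHom G n ⟨g, σ⟩ a b = if σ b = a then single (g a) 1 else 0 :=
    fun a b => rfl
  by_cases hpj : ∃ i, (M : Matrix (Fin n) (Fin n) (GA G)) i j ≠ 0
  · have hjL : ¬ (j ∈ _) := fun h => (hL j).mp h hpj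
    rw [if_neg hjL, mul_one, hW]
    have hσj : σ j = hpj.choose := hσ j hpj
    by_cases hi : σ j = i
    · rw [if_pos hi, ← hi]
      have hMσj : (M : Matrix (Fin n) (Fin n) (GA G)) (σ j) j ≠ 0 := by
        rw [hσj]; exact hpj.choose_spec
      have hrowi : ∃ k, (M : Matrix (Fin n) (Fin n) (GA G)) (σ j) k ≠ 0 := ⟨j, hMσj⟩
      have h2 : hrowi.choose = j := hrow (σ j) hrowi.choose_spec hMσj
      have h3 := hg _ hrowi
      rw [h2] at h3
      exact h3
    · rw [if_neg hi]
      by_contra hM0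
      apply hi
      have hMσj : (M : Matrix (Fin n) (Fin n) (GA G)) (σ j) j ≠ 0 := by
        rw [hσj]; exact hpj.choose_spec
      exact (hcol j hMσj hM0)
  · have hjL : j ∈ _ := (hL j).mpr hpj
    rw [if_pos hjL, mul_zero]
    by_contra h
    exact hpj ⟨i, h⟩

end Aux10
section Aux11
variable {F : Type*} [Field F] {G : Type*} [Group G] [Fintype G] {n : ℕ}
  {l : List (ConjClasses G × ℕ+)}

theorem single_epsProd_eq (L : List (Fin n)) :
    (single (epsProd L) (1 : F) : MonoidAlgebra F (GBar G n))
      = ((L.map (epsEl G)).map (fun u => single u (1 : F))).prod := by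
  induction L with
  | nil => simp [epsProd, MonoidAlgebra.one_def]
  | cons a L ih =>
    show (single (epsEl G a * (L.map (epsEl G)).prod) (1 : F) :
      MonoidAlgebra F (GBar G n)) = _
    rw [show ((1 : F)) = 1 * 1 from (one_mul 1).symm, ← MonoidAlgebra.single_mul_single]
    rw [List.map_cons, List.map_cons, List.prod_cons]
    rw [show ((L.map (epsEl G)).prod : GBar G n) = epsProd L from rfl]
    rw [ih]
    simp

theorem single_commute_DeltaList (M : GBar G n) :
    Commute (single M (1 : F) : MonoidAlgebra F (GBar G n)) (DeltaList F G n l) := by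
  obtain ⟨x, L, rfl⟩ := exists_decomp M
  have h1 : (single (wEl x * epsProd L) (1 : F) : MonoidAlgebra F (GBar G n))
      = single (wEl x) 1 * single (epsProd L) 1 := by
    rw [MonoidAlgebra.single_mul_single, one_mul]
  rw [h1]
  refine Commute.mul_left (of_wEl_commute_DeltaList x) ?_
  rw [single_epsProd_eq]
  apply Commute.list_prod_left
  intro y hy
  obtain ⟨u, hu, rfl⟩ := List.mem_map.mp hy
  obtain ⟨i, _, rfl⟩ := List.mem_map.mp hu
  exact Ee_commute_DeltaList i

end Aux11

/-- For every partition-valued function `ρ` on `G_*` with `‖ρ‖ ≤ n`, the element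
`Δ_n^{ρ} = Σ_T C_{n,T}^{ρ} ε̄_T` lies in the center of the semigroup algebra `F[Ḡ_n]`. -/
theorem Delta_mem_center (F : Type*) [Field F] (G : Type*) [Group G] [Fintype G] (n : ℕ)
    (ρ : PartFun G) (h : ρ.size ≤ n) :
    Delta F G n ρ ∈ Subalgebra.center F (MonoidAlgebra F (GBar G n)) := by
  rw [Subalgebra.mem_center_iff]
  intro b
  rw [Delta]
  induction b using MonoidAlgebra.induction_on with
  | of M =>
    rw [MonoidAlgebra.of_apply]
    exact (single_commute_DeltaList M).eq
  | add f g hf hg => rw [add_mul, mul_add, hf, hg]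
  | smul r f hf => rw [smul_mul_assoc, mul_smul_comm, hf]
end
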